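/- Let M be an m×n real matrix with nonnegative entries and let PG be its primary bipartite graph. If every cycle of length at least 8 in PG has a chord, then the matrix Mᵀ M has a chordal sparsity pattern. -/

import Mathlib

open Matrix

/-- A cycle `w` (a closed walk) in a simple graph `G` has a chord if there is an edge of `G`
joining two vertices of the cycle that is not one of the edges of the cycle (equivalently, for a
cycle, the two vertices are not consecutive on the cycle). -/
def SimpleGraph.Walk.HasChord {V : Type*} {G : SimpleGraph V} {v : V} (w : G.Walk v v) : Prop :=
  ∃ x y : V, x ∈ w.support ∧ y ∈ w.support ∧ G.Adj x y ∧ s(x, y) ∉ w.edges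

/-- A simple graph is chordal if every cycle of length at least 4 has a chord. -/
def SimpleGraph.IsChordalGraph {V : Type*} (G : SimpleGraph V) : Prop :=
  ∀ ⦃v : V⦄ (w : G.Walk v v), w.IsCycle → 4 ≤ w.length → w.HasChord

/-- The primary bipartite graph of an `m × n` matrix `M`: vertices `Fin m ⊕ Fin n`, with an edge
between left vertex `i` and right vertex `j` iff `M i j ≠ 0`, and no edges within a part. -/
def primaryGraph {m n : ℕ} (M : Matrix (Fin m) (Fin n) ℝ) : SimpleGraph (Fin m ⊕ Fin n) :=
  SimpleGraph.fromRel (fun a b => ∃ i j, a = Sum.inl i ∧ b = Sum.inr j ∧ M i j ≠ 0)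

/-- The sparsity-pattern graph of a square matrix `B`: distinct `i`, `i'` are adjacent
whenever `B i i' ≠ 0`. -/
def sparsityGraph {k : ℕ} (B : Matrix (Fin k) (Fin k) ℝ) : SimpleGraph (Fin k) :=
  SimpleGraph.fromRel (fun i i' => B i i' ≠ 0)


open SimpleGraph


-- Lemma R
lemma dart_getVert {V : Type*} {G : SimpleGraph V} {u x : V} (q : G.Walk u x)
    {d : G.Dart} (hd : d ∈ q.darts) :
    ∃ k, k < q.length ∧ d.fst = q.getVert k ∧ d.snd = q.getVert (k + 1) := by
  induction q with
  | nil => simp at hd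
  | cons h p ih =>
    rw [SimpleGraph.Walk.darts_cons, List.mem_cons] at hd
    rcases hd with rfl | hd
    · exact ⟨0, by simp, by simp, by simp [Walk.getVert_cons_succ]⟩
    · obtain ⟨k, hk, h1, h2⟩ := ih hd
      exact ⟨k + 1, by simpa using hk, by simp [Walk.getVert_cons_succ, h1],
        by simp [Walk.getVert_cons_succ, h2]⟩

-- Lemma S
lemma getVert_injOn {V : Type*} {G : SimpleGraph V} {u x : V} (q : G.Walk u x)
    (hnd : q.support.Nodup) : ∀ i ≤ q.length, ∀ j ≤ q.length,
    q.getVert i = q.getVert j → i = j := by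
  induction q with
  | nil => intro i hi j hj _; simp at hi hj; omega
  | cons h p ih =>
    rw [Walk.support_cons, List.nodup_cons] at hnd
    intro i hi j hj hij
    match i, j with
    | 0, 0 => rfl
    | 0, j + 1 =>
      rw [Walk.getVert_zero, Walk.getVert_cons_succ] at hij
      exact absurd (Walk.mem_support_iff_exists_getVert.2 ⟨j, hij.symm, by simp at hj; omega⟩) hnd.1
    | i + 1, 0 =>
      rw [Walk.getVert_zero, Walk.getVert_cons_succ] at hij
      exact absurd (Walk.mem_support_iff_exists_getVert.2 ⟨i, hij, by simp at hi; omega⟩) hnd.1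
    | i + 1, j + 1 =>
      rw [Walk.getVert_cons_succ, Walk.getVert_cons_succ] at hij
      simp only [Walk.length_cons] at hi hj
      exact congrArg Nat.succ (ih hnd.2 i (by omega) j (by omega) hij)

-- nodup of dropLast support for cycles
lemma cycle_dropLast_nodup {V : Type*} {G : SimpleGraph V} {v : V} {w : G.Walk v v}
    (hw : w.IsCycle) : w.support.dropLast.Nodup := by
  have h1 : w.support.tail.Nodup := hw.2
  have hne : w.support.tail ≠ [] := by
    have h3 := hw.three_le_length
    have hl := w.length_support
    intro h
    have h4 := congrArg List.length h
    rw [List.length_tail, hl] at h4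
    simp only [List.length_nil] at h4
    omega
  have hlast : w.support.tail.getLast hne = v := by
    rw [List.getLast_tail]; exact w.getLast_support
  have hsplit := List.dropLast_append_getLast hne
  rw [hlast] at hsplit
  rw [← hsplit] at h1
  have h2 := List.nodup_append.1 h1
  have hdl : w.support.dropLast = v :: w.support.tail.dropLast := by
    conv_lhs => rw [w.support_eq_cons]
    exact List.dropLast_cons_of_ne_nil hne
  rw [hdl, List.nodup_cons]
  exact ⟨fun hv => h2.2.2 v hv v (by simp) rfl, h2.1⟩

lemma dart_fst_inj {V : Type*} {G : SimpleGraph V} {v : V} {w : G.Walk v v}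
    (hw : w.IsCycle) {d d' : G.Dart} (hd : d ∈ w.darts) (hd' : d' ∈ w.darts)
    (h : d.fst = d'.fst) : d = d' := by
  have hnd : (w.darts.map (·.fst)).Nodup := by
    rw [Walk.map_fst_darts]; exact cycle_dropLast_nodup hw
  exact List.inj_on_of_nodup_map hnd hd hd' h

lemma dart_snd_inj {V : Type*} {G : SimpleGraph V} {v : V} {w : G.Walk v v}
    (hw : w.IsCycle) {d d' : G.Dart} (hd : d ∈ w.darts) (hd' : d' ∈ w.darts)
    (h : d.snd = d'.snd) : d = d' := by
  have hnd : (w.darts.map (·.snd)).Nodup := by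
    rw [Walk.map_snd_darts]; exact hw.2
  exact List.inj_on_of_nodup_map hnd hd hd' h

-- oriented triangle impossible in a cycle of length ≥ 4
lemma no_oriented_triangle {V : Type*} {G : SimpleGraph V} {v : V} {w : G.Walk v v}
    (hw : w.IsCycle) (hlen : 4 ≤ w.length) {a b c : V}
    {d1 d2 d3 : G.Dart} (h1 : d1 ∈ w.darts) (h2 : d2 ∈ w.darts) (h3 : d3 ∈ w.darts)
    (e1f : d1.fst = a) (e1s : d1.snd = b) (e2f : d2.fst = b) (e2s : d2.snd = c)
    (e3f : d3.fst = c) (e3s : d3.snd = a) : False := by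
  classical
  have hab : a ≠ b := e1f ▸ e1s ▸ d1.adj.ne
  have hbc : b ≠ c := e2f ▸ e2s ▸ d2.adj.ne
  have hca : c ≠ a := e3f ▸ e3s ▸ d3.adj.ne
  -- rotate so the cycle starts at a
  have ha : a ∈ w.support := e1f ▸ Walk.dart_fst_mem_support_of_mem_darts w h1
  set w' := w.rotate a ha with hw'
  have hc' : w'.IsCycle := hw.rotate ha
  have hdperm : w'.darts ~r w.darts := w.rotate_darts a ha
  have hdmem : ∀ d : G.Dart, d ∈ w'.darts ↔ d ∈ w.darts := fun d => hdperm.mem_iff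
  have hlen' : w'.length = w.length := by
    rw [← Walk.length_darts, ← Walk.length_darts, hdperm.perm.length_eq]
  clear_value w'
  cases w' with
  | nil => simp [Walk.isCycle_def] at hc'
  | cons hadj q =>
    rename_i s
    have hnd : q.support.Nodup := by
      have := hc'.2
      rwa [Walk.support_cons, List.tail_cons] at this
    have hqlen : q.length + 1 = w.length := by simpa using hlen'
    have hqa : q.getVert q.length = a := q.getVert_length
    have hd0 : (Walk.cons hadj q).darts = ⟨(a, s), hadj⟩ :: q.darts := rfl
    -- d1 has fst = a, so it's the first dart
    have hd1q : d1 ∉ q.darts := by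
      intro hmem
      obtain ⟨k, hk, hf, _⟩ := dart_getVert q hmem
      rw [e1f] at hf
      have := getVert_injOn q hnd k (by omega) q.length le_rfl (by rw [← hf, hqa])
      omega
    have hsb : s = b := by
      have : d1 ∈ (Walk.cons hadj q).darts := (hdmem d1).2 h1
      rw [hd0, List.mem_cons] at this
      rcases this with h | h
      · rw [← e1s, h]
      · exact absurd h hd1q
    subst hsb
    -- d2 : b → c must be in q.darts
    have hd2q : d2 ∈ q.darts := by
      have : d2 ∈ (Walk.cons hadj q).darts := (hdmem d2).2 h2
      rw [hd0, List.mem_cons] at this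
      rcases this with h | h
      · exact absurd (congrArg (·.fst) h) (by simp [e2f]; exact fun hh => (hab hh.symm))
      · exact h
    obtain ⟨k, hk, hf2, hs2⟩ := dart_getVert q hd2q
    rw [e2f] at hf2; rw [e2s] at hs2
    have hk0 : k = 0 := getVert_injOn q hnd k (by omega) 0 (by omega) (by rw [← hf2, q.getVert_zero])
    subst hk0
    -- so c = q.getVert 1
    have hd3q : d3 ∈ q.darts := by
      have : d3 ∈ (Walk.cons hadj q).darts := (hdmem d3).2 h3
      rw [hd0, List.mem_cons] at this
      rcases this with h | h
      · exact absurd (congrArg (·.fst) h) (by simp [e3f]; exact fun hh => (hca hh).elim)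
      · exact h
    obtain ⟨k', hk', hf3, hs3⟩ := dart_getVert q hd3q
    rw [e3f] at hf3; rw [e3s] at hs3
    have hk1 : k' = 1 := getVert_injOn q hnd k' (by omega) 1 (by omega) (by rw [← hf3, ← hs2])
    subst hk1
    -- a = q.getVert 2 and a = q.getVert q.length, so q.length = 2
    have : (2 : ℕ) = q.length :=
      getVert_injOn q hnd 2 (by omega) q.length le_rfl (by rw [← hs3, hqa])
    omega

-- a cycle of length ≥ 4 cannot contain all three edges of a triangle
lemma no_triangle {V : Type*} {G : SimpleGraph V} {v : V} {w : G.Walk v v}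
    (hw : w.IsCycle) (hlen : 4 ≤ w.length) {a b c : V}
    (hab : a ≠ b) (hbc : b ≠ c) (hac : a ≠ c)
    (h1 : s(a, b) ∈ w.edges) (h2 : s(b, c) ∈ w.edges) (h3 : s(a, c) ∈ w.edges) : False := by
  rw [Walk.edges, List.mem_map] at h1 h2 h3
  obtain ⟨d1, hd1, he1⟩ := h1
  obtain ⟨d2, hd2, he2⟩ := h2
  obtain ⟨d3, hd3, he3⟩ := h3
  have o1 : (d1.fst = a ∧ d1.snd = b) ∨ (d1.fst = b ∧ d1.snd = a) := by
    rw [Dart.edge, Sym2.eq, Sym2.rel_iff'] at he1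
    rcases he1 with h | h
    · exact Or.inl ⟨congrArg Prod.fst h, congrArg Prod.snd h⟩
    · exact Or.inr ⟨congrArg Prod.fst h, congrArg Prod.snd h⟩
  have o2 : (d2.fst = b ∧ d2.snd = c) ∨ (d2.fst = c ∧ d2.snd = b) := by
    rw [Dart.edge, Sym2.eq, Sym2.rel_iff'] at he2
    rcases he2 with h | h
    · exact Or.inl ⟨congrArg Prod.fst h, congrArg Prod.snd h⟩
    · exact Or.inr ⟨congrArg Prod.fst h, congrArg Prod.snd h⟩
  have o3 : (d3.fst = a ∧ d3.snd = c) ∨ (d3.fst = c ∧ d3.snd = a) := by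
    rw [Dart.edge, Sym2.eq, Sym2.rel_iff'] at he3
    rcases he3 with h | h
    · exact Or.inl ⟨congrArg Prod.fst h, congrArg Prod.snd h⟩
    · exact Or.inr ⟨congrArg Prod.fst h, congrArg Prod.snd h⟩
  rcases o1 with ⟨f1, s1⟩ | ⟨f1, s1⟩ <;> rcases o2 with ⟨f2, s2⟩ | ⟨f2, s2⟩ <;>
    rcases o3 with ⟨f3, s3⟩ | ⟨f3, s3⟩
  · -- (a,b) (b,c) (a,c) : d1, d3 share fst a
    have := dart_fst_inj hw hd1 hd3 (f1.trans f3.symm)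
    rw [this] at s1; exact hbc (s1.symm.trans s3)
  · -- (a,b) (b,c) (c,a) : oriented triangle
    exact no_oriented_triangle hw hlen hd1 hd2 hd3 f1 s1 f2 s2 f3 s3
  · -- (a,b) (c,b) (a,c) : d1, d3 share fst a
    have := dart_fst_inj hw hd1 hd3 (f1.trans f3.symm)
    rw [this] at s1; exact hbc (s1.symm.trans s3)
  · -- (a,b) (c,b) (c,a) : d2, d3 share fst c
    have := dart_fst_inj hw hd2 hd3 (f2.trans f3.symm)
    rw [this] at s2; exact hab (s3.symm.trans s2)
  · -- (b,a) (b,c) (a,c) : d1, d2 share fst b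
    have := dart_fst_inj hw hd1 hd2 (f1.trans f2.symm)
    rw [this] at s1; exact hac (s1.symm.trans s2)
  · -- (b,a) (b,c) (c,a) : d1, d2 share fst b
    have := dart_fst_inj hw hd1 hd2 (f1.trans f2.symm)
    rw [this] at s1; exact hac (s1.symm.trans s2)
  · -- (b,a) (c,b) (a,c) : oriented triangle a→c, c→b, b→a
    exact no_oriented_triangle hw hlen hd3 hd2 hd1 f3 s3 f2 s2 f1 s1
  · -- (b,a) (c,b) (c,a) : d2, d3 share fst c
    have := dart_fst_inj hw hd2 hd3 (f2.trans f3.symm)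
    rw [this] at s2; exact hab (s3.symm.trans s2)


section Aux
variable {m n : ℕ} {M : Matrix (Fin m) (Fin n) ℝ}

lemma Hadj_iff (hM : ∀ i j, 0 ≤ M i j) {a b : Fin n} :
    (sparsityGraph (Mᵀ * M)).Adj a b ↔ a ≠ b ∧ ∃ i, M i a ≠ 0 ∧ M i b ≠ 0 := by
  rw [sparsityGraph, SimpleGraph.fromRel_adj]
  have key : ∀ x y : Fin n, (Mᵀ * M) x y ≠ 0 ↔ ∃ i, M i x ≠ 0 ∧ M i y ≠ 0 := by
    intro x y
    rw [Matrix.mul_apply]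
    simp only [Matrix.transpose_apply]
    constructor
    · intro h
      by_contra hc
      push_neg at hc
      exact h (Finset.sum_eq_zero fun i _ => by
        rcases em (M i x = 0) with h0 | h0
        · rw [h0, zero_mul]
        · rw [hc i h0, mul_zero])
    · rintro ⟨i, hx, hy⟩ h
      have hnn : ∀ i ∈ Finset.univ, (0:ℝ) ≤ M i x * M i y :=
        fun i _ => mul_nonneg (hM i x) (hM i y)
      exact mul_ne_zero hx hy ((Finset.sum_eq_zero_iff_of_nonneg hnn).1 h i (Finset.mem_univ i))
  constructor
  · rintro ⟨hne, h | h⟩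
    · exact ⟨hne, (key a b).1 h⟩
    · obtain ⟨i, h1, h2⟩ := (key b a).1 h; exact ⟨hne, i, h2, h1⟩
  · rintro ⟨hne, i, h1, h2⟩
    exact ⟨hne, Or.inl ((key a b).2 ⟨i, h1, h2⟩)⟩

lemma PGadj_inl_inr {i : Fin m} {j : Fin n} :
    (primaryGraph M).Adj (Sum.inl i) (Sum.inr j) ↔ M i j ≠ 0 := by
  rw [primaryGraph, SimpleGraph.fromRel_adj]
  constructor
  · rintro ⟨-, ⟨i', j', hi, hj, h⟩ | ⟨i', j', hi, hj, h⟩⟩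
    · rw [Sum.inl.injEq] at hi; rw [Sum.inr.injEq] at hj; rwa [hi, hj]
    · exact absurd hi (by simp)
  · intro h
    exact ⟨by simp, Or.inl ⟨i, j, rfl, rfl, h⟩⟩

noncomputable def pick (hM : ∀ i j, 0 ≤ M i j) {a b : Fin n}
    (h : (sparsityGraph (Mᵀ * M)).Adj a b) : Fin m :=
  (((Hadj_iff hM).1 h).2).choose

lemma pick_spec (hM : ∀ i j, 0 ≤ M i j) {a b : Fin n}
    (h : (sparsityGraph (Mᵀ * M)).Adj a b) :
    M (pick hM h) a ≠ 0 ∧ M (pick hM h) b ≠ 0 :=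
  (((Hadj_iff hM).1 h).2).choose_spec

noncomputable def lift (hM : ∀ i j, 0 ≤ M i j) :
    ∀ {u v : Fin n}, (sparsityGraph (Mᵀ * M)).Walk u v →
      (primaryGraph M).Walk (Sum.inr u) (Sum.inr v)
  | _, _, .nil => .nil
  | _, _, .cons h p =>
      .cons ((PGadj_inl_inr.2 (pick_spec hM h).1).symm)
        (.cons (PGadj_inl_inr.2 (pick_spec hM h).2) (lift hM p))

lemma length_lift (hM : ∀ i j, 0 ≤ M i j) {u v : Fin n}
    (p : (sparsityGraph (Mᵀ * M)).Walk u v) : (lift hM p).length = 2 * p.length := by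
  induction p with
  | nil => rfl
  | cons h p ih => simp [lift, ih]; omega

lemma support_lift (hM : ∀ i j, 0 ≤ M i j) {u v : Fin n}
    (p : (sparsityGraph (Mᵀ * M)).Walk u v) :
    (lift hM p).support = Sum.inr u ::
      p.darts.flatMap (fun d => [Sum.inl (pick hM d.adj), Sum.inr d.snd]) := by
  induction p with
  | nil => rfl
  | cons h p ih =>
    rw [SimpleGraph.Walk.darts_cons, List.flatMap_cons]
    show Sum.inr _ :: Sum.inl _ :: (lift hM p).support = _
    rw [ih]
    rfl

lemma edges_lift (hM : ∀ i j, 0 ≤ M i j) {u v : Fin n}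
    (p : (sparsityGraph (Mᵀ * M)).Walk u v) :
    (lift hM p).edges = p.darts.flatMap (fun d =>
      [s(Sum.inr d.fst, Sum.inl (pick hM d.adj)), s(Sum.inl (pick hM d.adj), Sum.inr d.snd)]) := by
  induction p with
  | nil => rfl
  | cons h p ih =>
    show (SimpleGraph.Walk.cons _ (SimpleGraph.Walk.cons _ (lift hM p))).edges = _
    rw [SimpleGraph.Walk.edges_cons, SimpleGraph.Walk.edges_cons, ih,
      SimpleGraph.Walk.darts_cons, List.flatMap_cons]
    rfl

end Aux

section Sym2Sum
variable {α β : Type*}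

lemma sym2_A1 {a b : β} {i j : α} :
    s(Sum.inr a, Sum.inl i) = s(Sum.inr b, (Sum.inl j : α ⊕ β)) ↔ a = b ∧ i = j := by
  rw [Sym2.eq_iff]
  constructor
  · rintro (⟨h1, h2⟩ | ⟨h1, h2⟩)
    · exact ⟨Sum.inr.inj h1, Sum.inl.inj h2⟩
    · exact absurd h1 (by simp)
  · rintro ⟨rfl, rfl⟩; exact Or.inl ⟨rfl, rfl⟩

lemma sym2_A2 {a b : β} {i j : α} :
    s(Sum.inr a, Sum.inl i) = s(Sum.inl j, (Sum.inr b : α ⊕ β)) ↔ a = b ∧ i = j := by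
  rw [Sym2.eq_iff]
  constructor
  · rintro (⟨h1, h2⟩ | ⟨h1, h2⟩)
    · exact absurd h1 (by simp)
    · exact ⟨Sum.inr.inj h1, Sum.inl.inj h2⟩
  · rintro ⟨rfl, rfl⟩; exact Or.inr ⟨rfl, rfl⟩

lemma sym2_A3 {a b : β} {i j : α} :
    s(Sum.inl i, Sum.inr a) = s(Sum.inl j, (Sum.inr b : α ⊕ β)) ↔ i = j ∧ a = b := by
  rw [Sym2.eq_iff]
  constructor
  · rintro (⟨h1, h2⟩ | ⟨h1, h2⟩)
    · exact ⟨Sum.inl.inj h1, Sum.inr.inj h2⟩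
    · exact absurd h1 (by simp)
  · rintro ⟨rfl, rfl⟩; exact Or.inl ⟨rfl, rfl⟩

end Sym2Sum


/-- If every cycle of length at least 8 in the primary bipartite graph of a nonnegative matrix
`M` has a chord, then `Mᵀ * M` has a chordal sparsity pattern. -/
theorem transpose_mul_chordal {m n : ℕ} (M : Matrix (Fin m) (Fin n) ℝ)
    (hM : ∀ i j, 0 ≤ M i j)
    (hchord : ∀ (v : Fin m ⊕ Fin n) (w : (primaryGraph M).Walk v v),
      w.IsCycle → 8 ≤ w.length → w.HasChord) :
    (sparsityGraph (Mᵀ * M)).IsChordalGraph := by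
  intro v w hcyc hlen
  by_contra hnc
  simp only [SimpleGraph.Walk.HasChord, not_exists, not_and, not_not] at hnc
  -- hnc : no chord, i.e. every adjacency between support vertices is a cycle edge
  have claim1 : ∀ d ∈ w.darts, ∀ c ∈ w.support, M (pick hM d.adj) c ≠ 0 →
      c = d.fst ∨ c = d.snd := by
    intro d hd c hc hMc
    by_contra hcon
    push_neg at hcon
    obtain ⟨hc1, hc2⟩ := hcon
    have spec := pick_spec hM d.adj
    have hadj1 : (sparsityGraph (Mᵀ * M)).Adj d.fst c :=
      (Hadj_iff hM).2 ⟨fun h => hc1 h.symm, _, spec.1, hMc⟩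
    have hadj2 : (sparsityGraph (Mᵀ * M)).Adj d.snd c :=
      (Hadj_iff hM).2 ⟨fun h => hc2 h.symm, _, spec.2, hMc⟩
    have e1 : s(d.fst, d.snd) ∈ w.edges := List.mem_map_of_mem (f := SimpleGraph.Dart.edge) hd
    have e2 : s(d.fst, c) ∈ w.edges :=
      hnc _ _ (SimpleGraph.Walk.dart_fst_mem_support_of_mem_darts w hd) hc hadj1
    have e3 : s(d.snd, c) ∈ w.edges :=
      hnc _ _ (SimpleGraph.Walk.dart_snd_mem_support_of_mem_darts w hd) hc hadj2
    exact no_triangle hcyc hlen d.adj.ne (fun h => hc2 h.symm) (fun h => hc1 h.symm) e1 e3 e2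
  have hedges_nodup : w.edges.Nodup := hcyc.1.1.edges_nodup
  have hdarts_nodup : w.darts.Nodup := hedges_nodup.of_map _
  have hedgeinj : ∀ d ∈ w.darts, ∀ d' ∈ w.darts, d.edge = d'.edge → d = d' :=
    fun d hd d' hd' h => List.inj_on_of_nodup_map hedges_nodup hd hd' h
  have pickinj : ∀ d ∈ w.darts, ∀ d' ∈ w.darts, pick hM d.adj = pick hM d'.adj → d = d' := by
    intro d hd d' hd' hp
    have s1 := (pick_spec hM d'.adj).1
    have s2 := (pick_spec hM d'.adj).2
    rw [← hp] at s1 s2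
    have h1 := claim1 d hd d'.fst (SimpleGraph.Walk.dart_fst_mem_support_of_mem_darts w hd') s1
    have h2 := claim1 d hd d'.snd (SimpleGraph.Walk.dart_snd_mem_support_of_mem_darts w hd') s2
    rcases h1 with h1 | h1 <;> rcases h2 with h2 | h2
    · exact absurd (h1.trans h2.symm) d'.adj.ne
    · exact (SimpleGraph.Dart.ext d' d (Prod.ext h1 h2)).symm
    · have hedge : d'.edge = d.edge := by
        show s(d'.fst, d'.snd) = s(d.fst, d.snd)
        rw [h1, h2]
        exact Sym2.eq_swap
      have hdd := hedgeinj d' hd' d hd hedge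
      rw [hdd] at h1
      exact absurd h1 d.adj.ne
    · exact absurd (h1.trans h2.symm) d'.adj.ne
  have hsndinj : ∀ d ∈ w.darts, ∀ d' ∈ w.darts, d.snd = d'.snd → d = d' :=
    fun d hd d' hd' h => dart_snd_inj hcyc hd hd' h
  -- the lifted walk is a cycle in the primary graph
  have hsupp := support_lift hM w
  have hedges := edges_lift hM w
  have hcyc' : (lift hM w).IsCycle := by
    refine ⟨⟨⟨?_⟩, ?_⟩, ?_⟩
    · -- edges nodup
      rw [hedges, List.nodup_flatMap]
      refine ⟨fun d hd => ?_, ?_⟩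
      · refine List.nodup_cons.2 ⟨?_, List.nodup_singleton _⟩
        simp only [List.mem_singleton]
        intro h
        exact d.adj.ne (sym2_A2.1 h).1
      · refine List.Pairwise.imp_of_mem (fun {d d'} hd hd' hne => ?_) hdarts_nodup
        have hpne : pick hM d.adj ≠ pick hM d'.adj := fun h => hne (pickinj d hd d' hd' h)
        intro e he1 he2
        simp only [List.mem_cons, List.mem_singleton, List.not_mem_nil, or_false] at he1 he2
        rcases he1 with rfl | rfl
        · rcases he2 with he2 | he2
          · exact hpne (sym2_A1.1 he2).2
          · exact hpne (sym2_A2.1 he2).2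
        · rcases he2 with he2 | he2
          · exact hpne ((sym2_A2.1 he2.symm).2).symm
          · exact hpne (sym2_A3.1 he2).1
    · -- not nil
      intro h
      have h0 := congrArg SimpleGraph.Walk.length h
      rw [length_lift hM w] at h0
      simp only [SimpleGraph.Walk.length_nil] at h0
      omega
    · -- support tail nodup
      rw [hsupp, List.tail_cons, List.nodup_flatMap]
      refine ⟨fun d hd => ?_, ?_⟩
      · refine List.nodup_cons.2 ⟨?_, List.nodup_singleton _⟩
        simp only [List.mem_singleton]
        intro h
        exact absurd h (by simp)
      · refine List.Pairwise.imp_of_mem (fun {d d'} hd hd' hne => ?_) hdarts_nodup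
        intro x hx1 hx2
        simp only [List.mem_cons, List.mem_singleton, List.not_mem_nil, or_false] at hx1 hx2
        rcases hx1 with rfl | rfl
        · rcases hx2 with hx2 | hx2
          · exact hne (pickinj d hd d' hd' (Sum.inl.inj hx2))
          · exact absurd hx2 (by simp)
        · rcases hx2 with hx2 | hx2
          · exact absurd hx2 (by simp)
          · exact hne (hsndinj d hd d' hd' (Sum.inr.inj hx2))
  -- apply the chord hypothesis to the lifted cycle
  obtain ⟨x, y, hx, hy, hadj, hnot⟩ :=
    hchord (Sum.inr v) (lift hM w) hcyc' (by rw [length_lift]; omega)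
  have key : ∀ (i : Fin m) (c : Fin n), Sum.inl i ∈ (lift hM w).support →
      Sum.inr c ∈ (lift hM w).support → M i c ≠ 0 →
      s((Sum.inl i : Fin m ⊕ Fin n), Sum.inr c) ∈ (lift hM w).edges := by
    intro i c hi hc hMic
    rw [hsupp] at hi hc
    simp only [List.mem_cons, List.mem_flatMap, List.mem_singleton, List.not_mem_nil, or_false] at hi hc
    obtain ⟨d, hd, hdi⟩ : ∃ d ∈ w.darts, i = pick hM d.adj := by
      rcases hi with h | ⟨d, hd, h | h⟩
      · exact absurd h (by simp)
      · exact ⟨d, hd, Sum.inl.inj h⟩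
      · exact absurd h (by simp)
    have hcs : c ∈ w.support := by
      rcases hc with h | ⟨d', hd', h | h⟩
      · rw [Sum.inr.inj h]; exact w.start_mem_support
      · exact absurd h (by simp)
      · rw [Sum.inr.inj h]; exact SimpleGraph.Walk.dart_snd_mem_support_of_mem_darts w hd'
    subst hdi
    rcases claim1 d hd c hcs hMic with h | h
    · rw [hedges, List.mem_flatMap]
      refine ⟨d, hd, ?_⟩
      simp only [List.mem_cons, List.mem_singleton]
      exact Or.inl (by rw [h]; exact Sym2.eq_swap)
    · rw [hedges, List.mem_flatMap]
      refine ⟨d, hd, ?_⟩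
      simp only [List.mem_cons, List.mem_singleton]
      exact Or.inr (Or.inl (by rw [h]))
  rw [primaryGraph, SimpleGraph.fromRel_adj] at hadj
  rcases hadj with ⟨-, ⟨i, c, rfl, rfl, hMic⟩ | ⟨i, c, rfl, rfl, hMic⟩⟩
  · exact hnot (key i c hx hy hMic)
  · refine hnot ?_
    rw [Sym2.eq_swap]
    exact key i c hy hx hMic
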